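/- There exist a constant C > 0 and n_0 ∈ ℕ such that q^{k*}(n) ≤ C k^3 L(n)/n^{3/2} for all k ≥ 1 and all n ≥ n_0. -/

import Mathlib

open Filter Finset MeasureTheory

/-- The `k`-fold convolution of `q : ℕ → ℝ` with itself. -/
noncomputable def convPow (q : ℕ → ℝ) : ℕ → ℕ → ℝ
  | 0, n => if n = 0 then 1 else 0
  | k + 1, n => ∑ i ∈ Finset.range (n + 1), convPow q k i * q (n - i)

/-- `L : ℕ → ℝ` is slowly varying at infinity: `L(⌊cn⌋)/L(n) → 1` for every `c > 0`. -/
def SlowlyVaryingNat (L : ℕ → ℝ) : Prop :=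
  ∀ c : ℝ, 0 < c → Tendsto (fun n : ℕ => L ⌊c * (n : ℝ)⌋₊ / L n) atTop (nhds 1)

section Aux

variable {q : ℕ → ℝ}

lemma convPow_nonneg (hq : ∀ n, 0 ≤ q n) : ∀ k n, 0 ≤ convPow q k n := by
  intro k
  induction k with
  | zero => intro n; simp [convPow]; positivity
  | succ k ih =>
      intro n
      rw [convPow]
      exact Finset.sum_nonneg fun i _ => mul_nonneg (ih i) (hq _)

lemma q_partial (hq : ∀ n, 0 ≤ q n) (hsum : ∑' n, q n = 1) (s : Finset ℕ) :
    ∑ i ∈ s, q i ≤ 1 := by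
  have hs : Summable q := by
    by_contra h
    rw [tsum_eq_zero_of_not_summable h] at hsum; norm_num at hsum
  rw [← hsum]
  exact hs.sum_le_tsum s (fun i _ => hq i)

lemma convPow_partial (hq : ∀ n, 0 ≤ q n) (hq1 : ∀ s : Finset ℕ, ∑ i ∈ s, q i ≤ 1) :
    ∀ k M, ∑ i ∈ Finset.range (M + 1), convPow q k i ≤ 1 := by
  intro k
  induction k with
  | zero =>
      intro M
      simp [convPow, Finset.sum_ite_eq']
  | succ k ih =>
      intro M
      have key : ∑ n ∈ Finset.range (M + 1), convPow q (k+1) n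
          = ∑ i ∈ Finset.range (M + 1), convPow q k i * ∑ j ∈ Finset.range (M + 1 - i), q j := by
        simp only [convPow, Finset.mul_sum]
        rw [Finset.sum_sigma']
        rw [Finset.sum_sigma']
        apply Finset.sum_nbij' (fun p => ⟨p.2, p.1 - p.2⟩) (fun p => ⟨p.1 + p.2, p.1⟩)
        · rintro ⟨n, i⟩ h
          simp only [Finset.mem_sigma, Finset.mem_range] at h ⊢
          omega
        · rintro ⟨i, j⟩ h
          simp only [Finset.mem_sigma, Finset.mem_range] at h ⊢
          omega
        · rintro ⟨n, i⟩ h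
          simp only [Finset.mem_sigma, Finset.mem_range] at h
          dsimp only
          have hni : i + (n - i) = n := by omega
          rw [hni]
        · rintro ⟨i, j⟩ h
          simp only [Finset.mem_sigma, Finset.mem_range] at h
          dsimp only
          have hij : i + j - i = j := by omega
          rw [hij]
        · rintro ⟨n, i⟩ h
          dsimp only
      calc ∑ n ∈ Finset.range (M + 1), convPow q (k+1) n
          = ∑ i ∈ Finset.range (M + 1), convPow q k i * ∑ j ∈ Finset.range (M + 1 - i), q j := key
        _ ≤ ∑ i ∈ Finset.range (M + 1), convPow q k i * 1 := by
            apply Finset.sum_le_sum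
            intro i _
            exact mul_le_mul_of_nonneg_left (hq1 _) (convPow_nonneg hq k i)
        _ ≤ 1 := by simpa using ih M

lemma convPow_le_one (hq : ∀ n, 0 ≤ q n) (hq1 : ∀ s : Finset ℕ, ∑ i ∈ s, q i ≤ 1)
    (k n : ℕ) : convPow q k n ≤ 1 := by
  have h := convPow_partial hq hq1 k n
  have h2 : convPow q k n ≤ ∑ i ∈ Finset.range (n + 1), convPow q k i :=
    Finset.single_le_sum (fun i _ => convPow_nonneg hq k i) (Finset.self_mem_range_succ n)
  linarith

lemma convPow_succ_comm (k n : ℕ) :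
    convPow q (k + 1) n = ∑ m ∈ Finset.range (n + 1), q m * convPow q k (n - m) := by
  rw [convPow, ← Finset.sum_range_reflect]
  apply Finset.sum_congr rfl
  intro j hj
  rw [Finset.mem_range] at hj
  have h1 : n + 1 - 1 - j = n - j := by omega
  have h2 : n - (n - j) = j := by omega
  rw [h1, h2, mul_comm]

lemma convPow_maxterm (hq : ∀ n, 0 ≤ q n) :
    ∀ k t n, (k + 1) * t < n + (k + 1) →
      convPow q (k + 1) n ≤ (k + 1) * ∑ m ∈ Finset.Icc t n, q m * convPow q k (n - m) := by
  intro k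
  induction k with
  | zero =>
      intro t n hcond
      have ht : t ≤ n := by omega
      rw [convPow_succ_comm]
      have h1 : ∑ m ∈ Finset.range (n + 1), q m * convPow q 0 (n - m) = q n := by
        rw [Finset.sum_eq_single n]
        · simp [convPow]
        · intro m hm hmn
          rw [Finset.mem_range] at hm
          have : ¬ (n - m = 0) := by omega
          simp [convPow, this]
        · intro h; exact absurd (Finset.self_mem_range_succ n) h
      rw [h1]
      push_cast
      rw [zero_add, one_mul]
      have : q n * convPow q 0 (n - n) ≤ ∑ m ∈ Finset.Icc t n, q m * convPow q 0 (n - m) :=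
        Finset.single_le_sum
          (fun m _ => mul_nonneg (hq m) (convPow_nonneg hq 0 _))
          (Finset.mem_Icc.mpr ⟨ht, le_refl n⟩)
      simpa [convPow] using this
  | succ k ih =>
      intro t n hcond
      have ht : t ≤ n := by nlinarith [hcond]
      rw [convPow_succ_comm]
      -- split the sum
      have hsplit : ∑ m ∈ Finset.range (n + 1), q m * convPow q (k + 1) (n - m)
          = ∑ m ∈ Finset.range t, q m * convPow q (k + 1) (n - m)
          + ∑ m ∈ Finset.Icc t n, q m * convPow q (k + 1) (n - m) := by
        rw [Finset.range_eq_Ico, ← Finset.Ico_add_one_right_eq_Icc,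
          ← Finset.sum_Ico_consecutive _ (Nat.zero_le t) (by omega : t ≤ n + 1), Finset.range_eq_Ico]
      rw [hsplit]
      have hsecond : ∑ m ∈ Finset.range t, q m * convPow q (k + 1) (n - m)
          ≤ (k + 1) * ∑ m ∈ Finset.Icc t n, q m * convPow q (k + 1) (n - m) := by
        have step1 : ∀ m ∈ Finset.range t,
            q m * convPow q (k + 1) (n - m)
            ≤ q m * ((k + 1) * ∑ m' ∈ Finset.Icc t n,
                q m' * (if m + m' ≤ n then convPow q k (n - m - m') else 0)) := by
          intro m hm
          rw [Finset.mem_range] at hm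
          apply mul_le_mul_of_nonneg_left _ (hq m)
          have hc : (k + 1) * t < (n - m) + (k + 1) := by
            have : m < t := hm
            nlinarith [Nat.sub_add_cancel (le_trans (le_of_lt hm) ht)]
          calc convPow q (k + 1) (n - m)
              ≤ (k + 1) * ∑ m' ∈ Finset.Icc t (n - m), q m' * convPow q k (n - m - m') :=
                ih t (n - m) hc
            _ ≤ (k + 1) * ∑ m' ∈ Finset.Icc t n,
                q m' * (if m + m' ≤ n then convPow q k (n - m - m') else 0) := by
                apply mul_le_mul_of_nonneg_left _ (by positivity)
                have hsub : Finset.Icc t (n - m) ⊆ Finset.Icc t n :=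
                  Finset.Icc_subset_Icc_right (Nat.sub_le n m)
                have heq : ∀ m' ∈ Finset.Icc t (n - m),
                    q m' * convPow q k (n - m - m')
                    = q m' * (if m + m' ≤ n then convPow q k (n - m - m') else 0) := by
                  intro m' hm'
                  rw [Finset.mem_Icc] at hm'
                  have : m + m' ≤ n := by omega
                  rw [if_pos this]
                rw [Finset.sum_congr rfl heq]
                apply Finset.sum_le_sum_of_subset_of_nonneg hsub
                intro m' _ _
                apply mul_nonneg (hq m')
                split
                · exact convPow_nonneg hq k _
                · exact le_refl 0
        calc ∑ m ∈ Finset.range t, q m * convPow q (k + 1) (n - m)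
            ≤ ∑ m ∈ Finset.range t, q m * ((k + 1) * ∑ m' ∈ Finset.Icc t n,
                q m' * (if m + m' ≤ n then convPow q k (n - m - m') else 0)) :=
              Finset.sum_le_sum step1
          _ = (k + 1) * ∑ m' ∈ Finset.Icc t n, q m' *
                ∑ m ∈ Finset.range t, (if m + m' ≤ n then q m * convPow q k (n - m - m') else 0) := by
              simp only [Finset.mul_sum]
              rw [Finset.sum_comm]
              apply Finset.sum_congr rfl
              intro m' _
              apply Finset.sum_congr rfl
              intro m _
              split <;> ring
          _ ≤ (k + 1) * ∑ m' ∈ Finset.Icc t n, q m' * convPow q (k + 1) (n - m') := by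
              apply mul_le_mul_of_nonneg_left _ (by positivity)
              apply Finset.sum_le_sum
              intro m' hm'
              rw [Finset.mem_Icc] at hm'
              apply mul_le_mul_of_nonneg_left _ (hq m')
              rw [convPow_succ_comm, ← Finset.sum_filter]
              have hcg : ∀ m ∈ (Finset.range t).filter (fun m => m + m' ≤ n),
                  q m * convPow q k (n - m - m') = q m * convPow q k (n - m' - m) := by
                intro m _
                rw [Nat.sub_right_comm]
              rw [Finset.sum_congr rfl hcg]
              apply Finset.sum_le_sum_of_subset_of_nonneg
              · intro m hm
                rw [Finset.mem_filter, Finset.mem_range] at hm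
                rw [Finset.mem_range]
                omega
              · intro m _ _
                exact mul_nonneg (hq m) (convPow_nonneg hq k _)
      have hS : (0:ℝ) ≤ ∑ m ∈ Finset.Icc t n, q m * convPow q (k + 1) (n - m) :=
        Finset.sum_nonneg fun m _ => mul_nonneg (hq m) (convPow_nonneg hq (k+1) _)
      push_cast
      push_cast at hsecond
      linarith

lemma ratio_step (h : ℕ → ℝ)
    (hconv : ∀ c : ℝ, 0 < c → Tendsto (fun n : ℕ => h ⌊c * (n : ℝ)⌋₊ - h n) atTop (nhds 0))
    {ε : ℝ} (hε : 0 < ε) :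
    ∃ N : ℕ, 1 ≤ N ∧ ∀ n m : ℕ, N ≤ n → 3 * n ≤ 4 * m → m ≤ n → |h m - h n| ≤ ε := by
  classical
  set g : ℕ → ℝ → ℝ := fun n c => h ⌊c * (n : ℝ)⌋₊ - h n with hg
  have hgmeas : ∀ n : ℕ, Measurable (g n) := by
    intro n
    apply Measurable.sub _ measurable_const
    exact measurable_from_top.comp (Nat.measurable_floor.comp (measurable_id.mul_const _))
  set S : ℕ → Set ℝ := fun N =>
    Set.Icc (1 : ℝ) 2 ∩ ⋂ n : ℕ, {c : ℝ | N ≤ n → |g n c| ≤ ε / 2} with hS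
  have hSmeas : ∀ N, MeasurableSet (S N) := by
    intro N
    apply measurableSet_Icc.inter
    apply MeasurableSet.iInter
    intro n
    by_cases hn : N ≤ n
    · simp only [hn, forall_true_left]
      have : {c : ℝ | |g n c| ≤ ε / 2} = (fun c => |g n c|) ⁻¹' Set.Iic (ε / 2) := rfl
      rw [this]
      exact ((hgmeas n).abs) measurableSet_Iic
    · simp only [hn]
      simp
  have hSmono : Monotone S := by
    intro a b hab
    apply Set.inter_subset_inter_right
    apply Set.iInter_mono
    intro n c hc hn
    exact hc (le_trans hab hn)
  have hSunion : ⋃ N, S N = Set.Icc (1 : ℝ) 2 := by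
    apply Set.Subset.antisymm
    · exact Set.iUnion_subset fun N => Set.inter_subset_left
    · intro c hc
      have hc0 : (0 : ℝ) < c := lt_of_lt_of_le one_pos hc.1
      have := Metric.tendsto_atTop.mp (hconv c hc0) (ε / 2) (half_pos hε)
      obtain ⟨N, hN⟩ := this
      refine Set.mem_iUnion.mpr ⟨N, hc, ?_⟩
      refine Set.mem_iInter.mpr fun n => ?_
      intro hn
      have := hN n hn
      rw [Real.dist_eq, sub_zero] at this
      exact le_of_lt this
  have hμIcc : volume (Set.Icc (1 : ℝ) 2) = 1 := by
    rw [Real.volume_Icc]; norm_num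
  have htend : Tendsto (fun N => volume (S N)) atTop (nhds 1) := by
    have := tendsto_measure_iUnion_atTop (μ := volume) hSmono
    rwa [hSunion, hμIcc] at this
  have hev : ∀ᶠ N in atTop, volume (S N) > 31 / 32 := by
    apply htend.eventually_const_lt
    rw [ENNReal.div_lt_iff (by norm_num) (by norm_num), one_mul]
    norm_num
  obtain ⟨N₀, hN₀⟩ := hev.exists
  set E := S N₀ with hE
  set B := Set.Icc (1 : ℝ) 2 \ E with hB
  have hEsub : E ⊆ Set.Icc (1 : ℝ) 2 := Set.inter_subset_left
  have hBle : volume B ≤ 1 / 32 := by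
    have h1 : volume B = volume (Set.Icc (1 : ℝ) 2) - volume E :=
      measure_diff hEsub (hSmeas N₀).nullMeasurableSet
        (ne_top_of_le_ne_top (by simp [hμIcc]) (measure_mono hEsub))
    rw [h1, hμIcc]
    refine le_trans (tsub_le_tsub_left hN₀.le 1) ?_
    rw [tsub_le_iff_right, ENNReal.div_add_div_same]
    rw [show (1 : ENNReal) + 31 = 32 by norm_num, ENNReal.div_self (by norm_num) (by norm_num)]
  -- counting: for each j, the number of bad intervals is at most j/32
  have count : ∀ j : ℕ, 1 ≤ j →
      (((Finset.Icc j (2*j-1)).filter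
        (fun v : ℕ => Set.Ico ((v:ℝ)/j) (((v:ℝ)+1)/j) ∩ E = ∅)).card : ℝ) ≤ (j : ℝ) / 32 := by
    intro j hj
    set bad := (Finset.Icc j (2*j-1)).filter
        (fun v : ℕ => Set.Ico ((v:ℝ)/j) (((v:ℝ)+1)/j) ∩ E = ∅) with hbad
    have hjR : (0 : ℝ) < (j : ℝ) := by exact_mod_cast hj
    have hdisj : (↑bad : Set ℕ).PairwiseDisjoint
        (fun v : ℕ => Set.Ico ((v:ℝ)/j) (((v:ℝ)+1)/j)) := by
      intro a _ b _ hab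
      apply Set.Ico_disjoint_Ico.mpr
      rcases Nat.lt_or_ge a b with hlt | hge
      · have : ((a:ℝ)+1)/j ≤ (b:ℝ)/j := by
          apply div_le_div_of_nonneg_right _ hjR.le
          exact_mod_cast hlt
        calc min (((a:ℝ)+1)/j) (((b:ℝ)+1)/j) ≤ ((a:ℝ)+1)/j := min_le_left _ _
          _ ≤ (b:ℝ)/j := this
          _ ≤ max ((a:ℝ)/j) ((b:ℝ)/j) := le_max_right _ _
      · have hlt : b < a := lt_of_le_of_ne hge (fun hh => hab hh.symm)
        have : ((b:ℝ)+1)/j ≤ (a:ℝ)/j := by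
          apply div_le_div_of_nonneg_right _ hjR.le
          exact_mod_cast hlt
        calc min (((a:ℝ)+1)/j) (((b:ℝ)+1)/j) ≤ ((b:ℝ)+1)/j := min_le_right _ _
          _ ≤ (a:ℝ)/j := this
          _ ≤ max ((a:ℝ)/j) ((b:ℝ)/j) := le_max_left _ _
    have hsum : volume (⋃ v ∈ bad, Set.Ico ((v:ℝ)/j) (((v:ℝ)+1)/j))
        = ∑ v ∈ bad, volume (Set.Ico ((v:ℝ)/j) (((v:ℝ)+1)/j)) :=
      measure_biUnion_finset hdisj (fun v _ => measurableSet_Ico)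
    have hsub : (⋃ v ∈ bad, Set.Ico ((v:ℝ)/j) (((v:ℝ)+1)/j)) ⊆ B := by
      intro x hx
      rw [Set.mem_iUnion₂] at hx
      obtain ⟨v, hv, hxv⟩ := hx
      rw [hbad, Finset.mem_filter, Finset.mem_Icc] at hv
      constructor
      · constructor
        · have h1 : (1:ℝ) ≤ (v:ℝ)/j := by
            rw [le_div_iff₀ hjR, one_mul]
            exact_mod_cast hv.1.1
          linarith [hxv.1]
        · have hv2 : (v : ℝ) + 1 ≤ 2 * j := by
            have h3 : v + 1 ≤ 2*j := by
              have := hv.1.2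
              omega
            exact_mod_cast h3
          have h4 : ((v:ℝ)+1)/j ≤ 2 := by
            rw [div_le_iff₀ hjR]
            linarith
          linarith [hxv.2]
      · intro hxE
        have : x ∈ Set.Ico ((v:ℝ)/j) (((v:ℝ)+1)/j) ∩ E := ⟨hxv, hxE⟩
        rw [hv.2] at this
        exact this
    have hvol : ∀ v : ℕ, volume (Set.Ico ((v:ℝ)/j) (((v:ℝ)+1)/j)) = ENNReal.ofReal (1/j) := by
      intro v
      rw [Real.volume_Ico]
      congr 1
      field_simp
      ring
    have hcount1 : (bad.card : ENNReal) * ENNReal.ofReal (1/j) ≤ 1/32 := by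
      calc (bad.card : ENNReal) * ENNReal.ofReal (1/j)
          = ∑ v ∈ bad, volume (Set.Ico ((v:ℝ)/j) (((v:ℝ)+1)/j)) := by
            rw [Finset.sum_congr rfl (fun v _ => hvol v), Finset.sum_const, nsmul_eq_mul]
        _ = volume (⋃ v ∈ bad, Set.Ico ((v:ℝ)/j) (((v:ℝ)+1)/j)) := hsum.symm
        _ ≤ volume B := measure_mono hsub
        _ ≤ 1/32 := hBle
    have h132 : (1 : ENNReal)/32 = ENNReal.ofReal (1/32) := by
      rw [ENNReal.ofReal_div_of_pos (by norm_num)]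
      norm_num
    rw [h132, ← ENNReal.ofReal_natCast, ← ENNReal.ofReal_mul (by positivity)] at hcount1
    have h2 := (ENNReal.ofReal_le_ofReal_iff (by norm_num)).mp hcount1
    rw [mul_one_div, div_le_div_iff₀ hjR (by norm_num : (0:ℝ) < 32)] at h2
    rw [le_div_iff₀ (by norm_num : (0:ℝ) < 32)]
    linarith
  -- the main step
  refine ⟨2 * N₀ + 64, by omega, ?_⟩
  intro n m hn h34 hmn
  have hn1 : 64 ≤ n := by omega
  have hm1 : 48 ≤ m := by omega
  have hmN : N₀ ≤ m := by omega
  have hnN : N₀ ≤ n := by omega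
  set badn := (Finset.Icc n (2*n-1)).filter
      (fun v : ℕ => Set.Ico ((v:ℝ)/n) (((v:ℝ)+1)/n) ∩ E = ∅) with hbadn
  set badm := (Finset.Icc m (2*m-1)).filter
      (fun v : ℕ => Set.Ico ((v:ℝ)/m) (((v:ℝ)+1)/m) ∩ E = ∅) with hbadm
  have hcn : (badn.card : ℝ) ≤ (n : ℝ)/32 := count n (by omega)
  have hcm : (badm.card : ℝ) ≤ (m : ℝ)/32 := count m (by omega)
  set W := Finset.Icc n (2*m-1) with hW
  have hWcard : W.card = 2*m - n := by
    rw [hW, Nat.card_Icc]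
    omega
  have hex : ∃ v, v ∈ W ∧ v ∉ badn ∧ v ∉ badm := by
    by_contra hcon
    push_neg at hcon
    have hWsub : W ⊆ badn ∪ badm := by
      intro v hv
      rcases Classical.em (v ∈ badn) with h1 | h1
      · exact Finset.mem_union_left _ h1
      · exact Finset.mem_union_right _ (hcon v hv h1)
    have hcard : W.card ≤ badn.card + badm.card :=
      le_trans (Finset.card_le_card hWsub) (Finset.card_union_le _ _)
    have hcardR : ((2*m - n : ℕ) : ℝ) ≤ (n:ℝ)/32 + (m:ℝ)/32 := by
      rw [← hWcard]
      calc (W.card : ℝ) ≤ ((badn.card + badm.card : ℕ) : ℝ) := by exact_mod_cast hcard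
        _ ≤ (n:ℝ)/32 + (m:ℝ)/32 := by push_cast; linarith
    have h2mn : ((2*m - n : ℕ) : ℝ) = 2*(m:ℝ) - n := by
      have : n ≤ 2*m := by omega
      push_cast [Nat.cast_sub this]
      ring
    rw [h2mn] at hcardR
    have hmR : 3 * (n:ℝ) ≤ 4 * m := by exact_mod_cast h34
    have hmnR : (m:ℝ) ≤ n := by exact_mod_cast hmn
    have hnR : (64:ℝ) ≤ n := by exact_mod_cast hn1
    linarith
  obtain ⟨v, hvW, hv1, hv2⟩ := hex
  rw [hW, Finset.mem_Icc] at hvW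
  -- v is good for n
  have hgood : ∀ j : ℕ, 1 ≤ j → N₀ ≤ j → j ≤ v → v ≤ 2*j - 1 →
      (¬ (Set.Ico ((v:ℝ)/j) (((v:ℝ)+1)/j) ∩ E = ∅)) → |h v - h j| ≤ ε / 2 := by
    intro j hj1 hjN hjv hv2j hne
    obtain ⟨c, hcI, hcE⟩ := Set.nonempty_iff_ne_empty.mpr hne
    have hjR : (0:ℝ) < j := by exact_mod_cast hj1
    have hcpos : (0:ℝ) ≤ c := by
      have h5 : (0:ℝ) ≤ (v:ℝ)/j := by positivity
      linarith [hcI.1]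
    have hfloor : ⌊c * (j:ℝ)⌋₊ = v := by
      rw [Nat.floor_eq_iff (by positivity)]
      have e1 : ((v:ℝ)/j) * j = (v:ℝ) := by field_simp
      have e2 : (((v:ℝ)+1)/j) * j = (v:ℝ) + 1 := by field_simp
      have i1 : ((v:ℝ)/j) * j ≤ c * j := mul_le_mul_of_nonneg_right hcI.1 hjR.le
      have i2 : c * j < (((v:ℝ)+1)/j) * j := mul_lt_mul_of_pos_right hcI.2 hjR
      constructor
      · linarith
      · linarith
    have hcE2 := hcE.2
    rw [Set.mem_iInter] at hcE2
    have := hcE2 j hjN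
    rw [hg] at this
    simp only at this
    rw [hfloor] at this
    exact this
  have hvn : |h v - h n| ≤ ε / 2 := by
    apply hgood n (by omega) hnN hvW.1 (by omega)
    intro hemp
    apply hv1
    rw [hbadn, Finset.mem_filter]
    exact ⟨Finset.mem_Icc.mpr ⟨hvW.1, by omega⟩, hemp⟩
  have hvm : |h v - h m| ≤ ε / 2 := by
    apply hgood m (by omega) hmN (by omega) (by omega)
    intro hemp
    apply hv2
    rw [hbadm, Finset.mem_filter]
    exact ⟨Finset.mem_Icc.mpr ⟨by omega, by omega⟩, hemp⟩
  calc |h m - h n| = |(h m - h v) + (h v - h n)| := by ring_nf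
    _ ≤ |h m - h v| + |h v - h n| := abs_add_le _ _
    _ ≤ ε/2 + ε/2 := by
        rw [abs_sub_comm (h m) (h v)]
        exact add_le_add hvm hvn
    _ = ε := by ring

lemma ratio_chain (h : ℕ → ℝ)
    (hconv : ∀ c : ℝ, 0 < c → Tendsto (fun n : ℕ => h ⌊c * (n : ℝ)⌋₊ - h n) atTop (nhds 0))
    {ε : ℝ} (hε : 0 < ε) :
    ∃ N : ℕ, 1 ≤ N ∧ ∀ m n : ℕ, N ≤ m → m ≤ n →
      |h m - h n| ≤ ε * (8 * Real.log ((n : ℝ) / m) + 1) := by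
  obtain ⟨N₁, hN₁1, hN₁⟩ := ratio_step h hconv hε
  refine ⟨max N₁ 8, le_trans (by norm_num) (le_max_right _ _), ?_⟩
  intro m n hm hmn
  induction n using Nat.strong_induction_on with
  | _ n ih =>
    have hmN : N₁ ≤ m := le_trans (le_max_left _ _) hm
    have hm8 : 8 ≤ m := le_trans (le_max_right _ _) hm
    have hmR : (0:ℝ) < m := by positivity
    have hnm1 : (1:ℝ) ≤ (n:ℝ)/m := by
      rw [le_div_iff₀ hmR, one_mul]
      exact_mod_cast hmn
    have hlognm : 0 ≤ Real.log ((n:ℝ)/m) := Real.log_nonneg hnm1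
    by_cases hcase : 3 * n ≤ 4 * m
    · have := hN₁ n m (le_trans hmN hmn) hcase hmn
      nlinarith
    · push_neg at hcase
      set m' := (3 * n + 3) / 4 with hm'
      have hdm := Nat.div_add_mod (3 * n + 3) 4
      have hmod : (3 * n + 3) % 4 < 4 := Nat.mod_lt _ (by norm_num)
      have hn8 : 8 ≤ n := le_trans hm8 hmn
      have h1 : 3 * n ≤ 4 * m' := by omega
      have h2 : m' ≤ n := by omega
      have h3 : m ≤ m' := by omega
      have h4 : m' < n := by omega
      have h5 : 8 * m' ≤ 7 * n := by omega
      have hstep : |h m' - h n| ≤ ε := hN₁ n m' (le_trans hmN (by omega)) h1 h2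
      have hind : |h m - h m'| ≤ ε * (8 * Real.log ((m' : ℝ) / m) + 1) := ih m' h4 h3
      -- key: 8 * log (n / m') ≥ 1
      have hm'R : (0:ℝ) < m' := by
        have : 1 ≤ m' := by omega
        exact_mod_cast lt_of_lt_of_le one_pos (by exact_mod_cast this)
      have hnR : (0:ℝ) < n := by positivity
      have hq87 : (8:ℝ)/7 ≤ (n:ℝ)/m' := by
        rw [le_div_iff₀ hm'R]
        have : (8:ℝ) * m' ≤ 7 * n := by exact_mod_cast h5
        linarith
      have hlog87 : (1:ℝ)/8 ≤ Real.log ((8:ℝ)/7) := by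
        have h78 : Real.log ((7:ℝ)/8) ≤ (7:ℝ)/8 - 1 := Real.log_le_sub_one_of_pos (by norm_num)
        have hinv : Real.log ((8:ℝ)/7) = - Real.log ((7:ℝ)/8) := by
          rw [← Real.log_inv]
          norm_num
        rw [hinv]
        linarith
      have hkey : (1:ℝ)/8 ≤ Real.log ((n:ℝ)/m') :=
        le_trans hlog87 (Real.log_le_log (by norm_num) hq87)
      have hsplit : Real.log ((n:ℝ)/m) = Real.log ((n:ℝ)/m') + Real.log ((m':ℝ)/m) := by
        rw [← Real.log_mul (by positivity) (by positivity)]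
        congr 1
        field_simp
      calc |h m - h n| ≤ |h m - h m'| + |h m' - h n| := by
            have := abs_add_le (h m - h m') (h m' - h n)
            simpa using this
        _ ≤ ε * (8 * Real.log ((m' : ℝ) / m) + 1) + ε := by linarith
        _ ≤ ε * (8 * Real.log ((n : ℝ) / m) + 1) := by
            rw [hsplit]
            nlinarith

lemma exp_ratio {a b x : ℝ} (ha : 0 < a) (hb : 0 < b) (hx : 1 ≤ x)
    (hd : Real.log a - Real.log b ≤ (1/16) * (8 * Real.log x + 1)) :
    a ≤ 2 * Real.sqrt x * b := by
  have hxpos : (0:ℝ) < x := lt_of_lt_of_le one_pos hx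
  have hs : 0 < Real.sqrt x := Real.sqrt_pos.mpr hxpos
  have hlogs : Real.log (Real.sqrt x) = (1/2) * Real.log x := by
    rw [Real.log_sqrt hxpos.le]; ring
  have hlog2 : (1:ℝ)/16 ≤ Real.log 2 := by
    have h1 := Real.log_le_sub_one_of_pos (by norm_num : (0:ℝ) < 1/2)
    have h2 : Real.log ((1:ℝ)/2) = - Real.log 2 := by
      rw [one_div, Real.log_inv]
    linarith
  have hmain : Real.log a ≤ Real.log (2 * (Real.sqrt x * b)) := by
    rw [Real.log_mul (by norm_num) (by positivity),
      Real.log_mul (ne_of_gt hs) (ne_of_gt hb), hlogs]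
    linarith
  calc a = Real.exp (Real.log a) := (Real.exp_log ha).symm
    _ ≤ Real.exp (Real.log (2 * (Real.sqrt x * b))) := Real.exp_le_exp.mpr hmain
    _ = 2 * (Real.sqrt x * b) := Real.exp_log (by positivity)
    _ = 2 * Real.sqrt x * b := by ring

end Aux

/-- There exist `C > 0` and `n₀` such that `q^{k*}(n) ≤ C k³ L(n)/n^{3/2}`
for all `k ≥ 1` and all `n ≥ n₀`. -/
theorem stmt_2 (L : ℕ → ℝ) (hLpos : ∀ n, 0 < L n) (hL : SlowlyVaryingNat L)
    (c_q : ℝ) (hcq : 0 < c_q)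
    (q : ℕ → ℝ) (hq0 : q 0 = 0) (hqmem : ∀ n, q n ∈ Set.Icc (0 : ℝ) 1)
    (hqsum : ∑' n, q n = 1)
    (hqa : Tendsto (fun n : ℕ => (n : ℝ) ^ ((3 : ℝ) / 2) * q n / L n) atTop (nhds c_q)) :
    ∃ C : ℝ, 0 < C ∧ ∃ n₀ : ℕ, ∀ k n : ℕ, 1 ≤ k → n₀ ≤ n →
      convPow q k n ≤ C * (k : ℝ) ^ 3 * L n / (n : ℝ) ^ ((3 : ℝ) / 2) := by
  classical
  have hqnn : ∀ n, 0 ≤ q n := fun n => (hqmem n).1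
  have hq1 : ∀ s : Finset ℕ, ∑ i ∈ s, q i ≤ 1 := q_partial hqnn hqsum
  have hconv : ∀ c : ℝ, 0 < c →
      Tendsto (fun n : ℕ => Real.log (L ⌊c * (n : ℝ)⌋₊) - Real.log (L n)) atTop (nhds 0) := by
    intro c hc
    have h2 : Tendsto (fun n : ℕ => Real.log (L ⌊c * (n:ℝ)⌋₊ / L n)) atTop
        (nhds (Real.log 1)) :=
      ((Real.continuousAt_log one_ne_zero).tendsto).comp (hL c hc)
    rw [Real.log_one] at h2
    apply h2.congr
    intro n
    exact Real.log_div (ne_of_gt (hLpos _)) (ne_of_gt (hLpos _))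
  obtain ⟨Nc, hNc1, hNc⟩ :=
    ratio_chain (fun n => Real.log (L n)) hconv (by norm_num : (0:ℝ) < 1/16)
  have hNcR : (0:ℝ) < Nc := by exact_mod_cast hNc1
  -- upper ratio bound
  have hup : ∀ m n : ℕ, Nc ≤ m → m ≤ n → L m ≤ 2 * Real.sqrt ((n:ℝ)/m) * L n := by
    intro m n hm hmn
    have hmpos : (0:ℝ) < m := lt_of_lt_of_le hNcR (by exact_mod_cast hm)
    have hx : (1:ℝ) ≤ (n:ℝ)/m := by
      rw [le_div_iff₀ hmpos, one_mul]
      exact_mod_cast hmn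
    apply exp_ratio (hLpos m) (hLpos n) hx
    calc Real.log (L m) - Real.log (L n) ≤ |Real.log (L m) - Real.log (L n)| := le_abs_self _
      _ ≤ 1/16 * (8 * Real.log ((n:ℝ)/m) + 1) := hNc m n hm hmn
  -- lower bound
  obtain ⟨c₀, hc₀pos, hlow⟩ :
      ∃ c₀ : ℝ, 0 < c₀ ∧ ∀ n : ℕ, Nc ≤ n → c₀ ≤ Real.sqrt n * L n := by
    have hsNc : (0:ℝ) < Real.sqrt Nc := Real.sqrt_pos.mpr hNcR
    refine ⟨Real.sqrt Nc * L Nc / 2,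
      div_pos (mul_pos hsNc (hLpos Nc)) (by norm_num), ?_⟩
    intro n hn
    have hnpos : (0:ℝ) < n := lt_of_lt_of_le hNcR (by exact_mod_cast hn)
    have hx : (1:ℝ) ≤ (n:ℝ)/Nc := by
      rw [le_div_iff₀ hNcR, one_mul]
      exact_mod_cast hn
    have h1 : L Nc ≤ 2 * Real.sqrt ((n:ℝ)/Nc) * L n := by
      apply exp_ratio (hLpos Nc) (hLpos n) hx
      calc Real.log (L Nc) - Real.log (L n) ≤ |Real.log (L Nc) - Real.log (L n)| :=
            le_abs_self _
        _ ≤ 1/16 * (8 * Real.log ((n:ℝ)/Nc) + 1) := hNc Nc n le_rfl hn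
    rw [Real.sqrt_div (Nat.cast_nonneg n)] at h1
    rw [div_le_iff₀ (by norm_num : (0:ℝ) < 2)]
    have h2 := mul_le_mul_of_nonneg_left h1 hsNc.le
    have h3 : Real.sqrt Nc * (2 * (Real.sqrt n / Real.sqrt Nc) * L n)
        = 2 * (Real.sqrt n * L n) := by
      field_simp
    rw [h3] at h2
    linarith
  -- pointwise bound on q
  have hq2 : ∀ᶠ (j : ℕ) in atTop, (j : ℝ) ^ ((3:ℝ)/2) * q j / L j ≤ 2 * c_q :=
    hqa.eventually (eventually_le_nhds (by linarith))
  obtain ⟨n₁, hn₁⟩ := eventually_atTop.mp hq2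
  have hP : ∀ m : ℕ, n₁ ≤ m → q m * (m:ℝ) ^ ((3:ℝ)/2) ≤ 2 * c_q * L m := by
    intro m hm
    have h1 := hn₁ m hm
    rw [div_le_iff₀ (hLpos m)] at h1
    calc q m * (m:ℝ) ^ ((3:ℝ)/2) = (m:ℝ) ^ ((3:ℝ)/2) * q m := mul_comm _ _
      _ ≤ 2 * c_q * L m := h1
  set C := max (4 * c_q) 1 with hC
  have hCpos : (0:ℝ) < C := lt_of_lt_of_le one_pos (le_max_right _ _)
  set N₁ := max (max n₁ Nc) 1 with hN₁
  have hN₁1 : 1 ≤ N₁ := le_max_right _ _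
  have hNcN₁ : Nc ≤ N₁ := le_trans (le_max_right _ _) (le_max_left _ _)
  have hn₁N₁ : n₁ ≤ N₁ := le_trans (le_max_left _ _) (le_max_left _ _)
  refine ⟨C, hCpos, max N₁ (⌈(N₁:ℝ)^3 / (C * c₀)⌉₊ + 1), ?_⟩
  intro k n hk hn
  have hnN₁ : N₁ ≤ n := le_trans (le_max_left _ _) hn
  have hnNc : Nc ≤ n := le_trans hNcN₁ hnN₁
  have hn1 : 1 ≤ n := le_trans hN₁1 hnN₁
  have hnpos : (0:ℝ) < n := by exact_mod_cast hn1
  have hrpos : (0:ℝ) < (n:ℝ) ^ ((3:ℝ)/2) := Real.rpow_pos_of_pos hnpos _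
  rw [le_div_iff₀ hrpos]
  by_cases hcase : N₁ * k ≤ n
  · -- main case: use the max-term decomposition
    obtain ⟨k', rfl⟩ : ∃ k', k = k' + 1 := ⟨k - 1, by omega⟩
    set t := (n + (k' + 1) - 1) / (k' + 1) with ht
    have hdm := Nat.div_add_mod (n + (k' + 1) - 1) (k' + 1)
    have hmod := Nat.mod_lt (n + (k' + 1) - 1) (show 0 < k' + 1 by omega)
    rw [← ht] at hdm
    have htk : (k' + 1) * t < n + (k' + 1) := by omega
    have hkt : n ≤ (k' + 1) * t := by omega
    have htN : N₁ ≤ t := by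
      have h1 : N₁ * (k' + 1) ≤ t * (k' + 1) := by
        rw [Nat.mul_comm t]
        exact le_trans hcase hkt
      exact Nat.le_of_mul_le_mul_right h1 (Nat.succ_pos k')
    have htn : t ≤ n := by
      rw [ht, Nat.div_le_iff_le_mul_add_pred (Nat.succ_pos k')]
      have := Nat.le_mul_of_pos_left n (Nat.succ_pos k')
      omega
    have hkR : (0:ℝ) < ((k' : ℝ) + 1) := by positivity
    have hqm : ∀ m ∈ Finset.Icc t n,
        q m ≤ 4 * c_q * ((k' : ℝ) + 1)^2 * L n / (n:ℝ) ^ ((3:ℝ)/2) := by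
      intro m hm
      rw [Finset.mem_Icc] at hm
      have hmN₁ : N₁ ≤ m := le_trans htN hm.1
      have hmpos : (0:ℝ) < m := by
        have : (1:ℕ) ≤ m := le_trans hN₁1 hmN₁
        exact_mod_cast this
      have hkm : (n:ℝ) ≤ ((k' : ℝ) + 1) * m := by
        have h5 : n ≤ (k' + 1) * m := le_trans hkt (Nat.mul_le_mul_left _ hm.1)
        exact_mod_cast h5
      have ha1 : q m * (m:ℝ) ^ ((3:ℝ)/2) ≤ 2 * c_q * L m := hP m (le_trans hn₁N₁ hmN₁)
      have ha2 : L m ≤ 2 * Real.sqrt ((n:ℝ)/m) * L n := hup m n (le_trans hNcN₁ hmN₁) hm.2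
      have ha3 : Real.sqrt ((n:ℝ)/m) ≤ Real.sqrt ((k' : ℝ) + 1) := by
        apply Real.sqrt_le_sqrt
        rw [div_le_iff₀ hmpos]
        exact hkm
      have ha4 : (n:ℝ) ^ ((3:ℝ)/2) ≤ ((k' : ℝ) + 1) ^ ((3:ℝ)/2) * (m:ℝ) ^ ((3:ℝ)/2) := by
        rw [← Real.mul_rpow hkR.le hmpos.le]
        exact Real.rpow_le_rpow (Nat.cast_nonneg n) hkm (by norm_num)
      have ha5 : Real.sqrt ((k' : ℝ) + 1) * ((k' : ℝ) + 1) ^ ((3:ℝ)/2) = ((k' : ℝ) + 1)^2 := by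
        rw [Real.sqrt_eq_rpow, ← Real.rpow_add hkR]
        rw [show (1:ℝ)/2 + 3/2 = ((2:ℕ):ℝ) by norm_num, Real.rpow_natCast]
      rw [le_div_iff₀ hrpos]
      have hrk : (0:ℝ) ≤ ((k' : ℝ) + 1) ^ ((3:ℝ)/2) := Real.rpow_nonneg hkR.le _
      calc q m * (n:ℝ) ^ ((3:ℝ)/2)
          ≤ q m * (((k' : ℝ) + 1) ^ ((3:ℝ)/2) * (m:ℝ) ^ ((3:ℝ)/2)) :=
            mul_le_mul_of_nonneg_left ha4 (hqnn m)
        _ = ((k' : ℝ) + 1) ^ ((3:ℝ)/2) * (q m * (m:ℝ) ^ ((3:ℝ)/2)) := by ring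
        _ ≤ ((k' : ℝ) + 1) ^ ((3:ℝ)/2) * (2 * c_q * L m) :=
            mul_le_mul_of_nonneg_left ha1 hrk
        _ ≤ ((k' : ℝ) + 1) ^ ((3:ℝ)/2) * (2 * c_q * (2 * Real.sqrt ((n:ℝ)/m) * L n)) := by
            apply mul_le_mul_of_nonneg_left _ hrk
            exact mul_le_mul_of_nonneg_left ha2 (by linarith)
        _ ≤ ((k' : ℝ) + 1) ^ ((3:ℝ)/2) *
              (2 * c_q * (2 * Real.sqrt ((k' : ℝ) + 1) * L n)) := by
            apply mul_le_mul_of_nonneg_left _ hrk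
            apply mul_le_mul_of_nonneg_left _ (by linarith : (0:ℝ) ≤ 2 * c_q)
            apply mul_le_mul_of_nonneg_right _ (hLpos n).le
            exact mul_le_mul_of_nonneg_left ha3 (by norm_num)
        _ = 4 * c_q * (Real.sqrt ((k' : ℝ) + 1) * ((k' : ℝ) + 1) ^ ((3:ℝ)/2)) * L n := by
            ring
        _ = 4 * c_q * ((k' : ℝ) + 1)^2 * L n := by rw [ha5]
    have hsum1 : ∑ m ∈ Finset.Icc t n, convPow q k' (n - m) ≤ 1 := by
      have hre : ∑ m ∈ Finset.Icc t n, convPow q k' (n - m)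
          = ∑ j ∈ Finset.range (n - t + 1), convPow q k' j := by
        apply Finset.sum_nbij' (fun m => n - m) (fun j => n - j)
        · intro m hm
          rw [Finset.mem_Icc] at hm
          rw [Finset.mem_range]
          omega
        · intro j hj
          rw [Finset.mem_range] at hj
          rw [Finset.mem_Icc]
          omega
        · intro m hm
          rw [Finset.mem_Icc] at hm
          omega
        · intro j hj
          rw [Finset.mem_range] at hj
          omega
        · intro m hm
          rfl
      rw [hre]
      exact convPow_partial hqnn hq1 k' (n - t)
    have hmax := convPow_maxterm hqnn k' t n htk
    set Q := 4 * c_q * ((k' : ℝ) + 1)^2 * L n / (n:ℝ) ^ ((3:ℝ)/2) with hQ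
    have hQ0 : 0 ≤ Q :=
      div_nonneg (mul_nonneg (mul_nonneg (by linarith) (sq_nonneg _)) (hLpos n).le) hrpos.le
    have hsum2 : ∑ m ∈ Finset.Icc t n, q m * convPow q k' (n - m) ≤ Q := by
      calc ∑ m ∈ Finset.Icc t n, q m * convPow q k' (n - m)
          ≤ ∑ m ∈ Finset.Icc t n, Q * convPow q k' (n - m) := by
            apply Finset.sum_le_sum
            intro m hm
            exact mul_le_mul_of_nonneg_right (hqm m hm) (convPow_nonneg hqnn k' _)
        _ = Q * ∑ m ∈ Finset.Icc t n, convPow q k' (n - m) := by rw [Finset.mul_sum]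
        _ ≤ Q * 1 := mul_le_mul_of_nonneg_left hsum1 hQ0
        _ = Q := mul_one Q
    have hfin : convPow q (k' + 1) n ≤ ((k' : ℝ) + 1) * Q :=
      le_trans hmax (mul_le_mul_of_nonneg_left hsum2 (by positivity))
    have hQn : ((k' : ℝ) + 1) * Q * (n:ℝ) ^ ((3:ℝ)/2)
        = 4 * c_q * ((k' : ℝ) + 1)^3 * L n := by
      rw [hQ]
      field_simp
    have h4C : 4 * c_q ≤ C := le_max_left _ _
    calc convPow q (k' + 1) n * (n:ℝ) ^ ((3:ℝ)/2)
        ≤ ((k' : ℝ) + 1) * Q * (n:ℝ) ^ ((3:ℝ)/2) :=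
          mul_le_mul_of_nonneg_right hfin hrpos.le
      _ = 4 * c_q * ((k' : ℝ) + 1)^3 * L n := hQn
      _ ≤ C * ((k' : ℝ) + 1)^3 * L n := by
          apply mul_le_mul_of_nonneg_right _ (hLpos n).le
          exact mul_le_mul_of_nonneg_right h4C (by positivity)
      _ = C * ((k' + 1 : ℕ) : ℝ)^3 * L n := by push_cast; ring
  · -- degenerate case: k is large compared to n
    push_neg at hcase
    have hP1 : convPow q k n ≤ 1 := convPow_le_one hqnn hq1 k n
    have hnk : (n:ℝ) ≤ (N₁:ℝ) * k := by
      have h5 : n ≤ N₁ * k := le_of_lt hcase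
      exact_mod_cast h5
    have hN3 : (N₁:ℝ)^3 ≤ C * c₀ * n := by
      have h2 : ⌈(N₁:ℝ)^3 / (C * c₀)⌉₊ + 1 ≤ n := le_trans (le_max_right _ _) hn
      have h1 : (N₁:ℝ)^3 / (C * c₀) ≤ n := by
        calc (N₁:ℝ)^3 / (C * c₀) ≤ (⌈(N₁:ℝ)^3 / (C * c₀)⌉₊ : ℝ) := Nat.le_ceil _
          _ ≤ n := by exact_mod_cast le_trans (Nat.le_succ _) h2
      rw [div_le_iff₀ (by positivity)] at h1
      linarith
    have hc₀n := hlow n hnNc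
    have hs0 : 0 ≤ Real.sqrt n := Real.sqrt_nonneg _
    have hss : Real.sqrt n * Real.sqrt n = (n:ℝ) := Real.mul_self_sqrt (Nat.cast_nonneg n)
    have hrn : (n:ℝ) ^ ((3:ℝ)/2) = (n:ℝ) * Real.sqrt n := by
      rw [show (3:ℝ)/2 = 1 + 1/2 by norm_num, Real.rpow_add hnpos, Real.rpow_one,
        Real.sqrt_eq_rpow]
    have hk0 : (0:ℝ) < (k:ℝ) := by exact_mod_cast hk
    have e1 : (n:ℝ)^3 ≤ ((N₁:ℝ) * k)^3 := pow_le_pow_left₀ (Nat.cast_nonneg n) hnk 3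
    have e3 : ((N₁:ℝ) * k)^3 ≤ (C * c₀ * n) * (k:ℝ)^3 := by
      have h6 : ((N₁:ℝ) * k)^3 = (N₁:ℝ)^3 * (k:ℝ)^3 := by ring
      rw [h6]
      exact mul_le_mul_of_nonneg_right hN3 (by positivity)
    have e4 : (n:ℝ)^2 ≤ C * c₀ * (k:ℝ)^3 := by nlinarith [e1, e3, hnpos]
    have e5 : (n:ℝ) * Real.sqrt n * c₀ ≤ (n:ℝ)^2 * L n := by
      have h7 := mul_le_mul_of_nonneg_left hc₀n (mul_nonneg hnpos.le hs0)
      have h8 : (n:ℝ) * Real.sqrt n * (Real.sqrt n * L n) = (n:ℝ)^2 * L n := by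
        calc (n:ℝ) * Real.sqrt n * (Real.sqrt n * L n)
            = (n:ℝ) * (Real.sqrt n * Real.sqrt n) * L n := by ring
          _ = (n:ℝ)^2 * L n := by rw [hss]; ring
      calc (n:ℝ) * Real.sqrt n * c₀ ≤ (n:ℝ) * Real.sqrt n * (Real.sqrt n * L n) := h7
        _ = (n:ℝ)^2 * L n := h8
    have e6 : (n:ℝ)^2 * L n ≤ C * c₀ * (k:ℝ)^3 * L n :=
      mul_le_mul_of_nonneg_right e4 (hLpos n).le
    calc convPow q k n * (n:ℝ) ^ ((3:ℝ)/2)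
        ≤ 1 * (n:ℝ) ^ ((3:ℝ)/2) := mul_le_mul_of_nonneg_right hP1 hrpos.le
      _ = (n:ℝ) * Real.sqrt n := by rw [one_mul, hrn]
      _ ≤ C * (k:ℝ)^3 * L n := by nlinarith [e5, e6, hc₀pos]
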